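/- For every pair of fillings (S,T), the polynomial P(S,T) is a matrix semi-invariant: for every (A,C) ∈ SL(n,ℚ) × SL(n,ℚ), P(S,T) is fixed by the ℚ-algebra endomorphism of ℚ[x_{i,j}^{(k)} : k ∈ {1,…,dn}, i,j ∈ {1,…,n}] sending each variable x_{i,j}^{(k)} to the (i,j) entry of A·X_k·C⁻¹. -/

import Mathlib

noncomputable section

open Matrix

section Dmix
variable {R : Type*} [CommRing R] {N ι : Type*} [Fintype N] [Fintype ι]
  [DecidableEq N] [DecidableEq ι] (e : ι ≃ N)

/-- Mixed determinant: sum over permutations of determinants of column-mixed matrices. -/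
def Dmix (Y : N → Matrix ι ι R) : R :=
  ∑ σ : Equiv.Perm N, (Matrix.of fun p q : ι => Y (σ (e q)) p q).det

lemma Dmix_mul_left (Y : N → Matrix ι ι R) (A : Matrix ι ι R) :
    Dmix e (fun k => A * Y k) = A.det * Dmix e Y := by
  unfold Dmix
  rw [Finset.mul_sum]
  refine Finset.sum_congr rfl fun σ _ => ?_
  rw [← Matrix.det_mul]
  have : (Matrix.of fun p q : ι => (A * Y (σ (e q))) p q)
      = A * Matrix.of fun p q : ι => Y (σ (e q)) p q := by
    ext p q; simp [Matrix.mul_apply]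
  rw [this]

lemma Dmix_mul_right (Y : N → Matrix ι ι R) (B : Matrix ι ι R) :
    Dmix e (fun k => Y k * B) = B.det * Dmix e Y := by
  classical
  set f : (ι → R) [⋀^ι]→ₗ[R] R := Matrix.detRowAlternating with hf
  -- column m of Y k, as a vector
  set col : N → ι → (ι → R) := fun k m p => Y k p m with hcol
  have hdet : ∀ σ : Equiv.Perm N,
      (Matrix.of fun p q : ι => Y (σ (e q)) p q).det = f (fun q => col (σ (e q)) q) := by
    intro σ
    rw [← Matrix.det_transpose]
    rfl
  -- Step 1: expand each determinant
  have step1 : ∀ σ : Equiv.Perm N,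
      (Matrix.of fun p q : ι => (Y (σ (e q)) * B) p q).det
        = ∑ g : ι → ι, (∏ q : ι, B (g q) q) • f (fun q => col (σ (e q)) (g q)) := by
    intro σ
    rw [← Matrix.det_transpose]
    have : ((Matrix.of fun p q : ι => (Y (σ (e q)) * B) p q)ᵀ).det
        = f (fun q => ∑ m : ι, B m q • col (σ (e q)) m) := by
      congr 1
      ext q p
      simp [Matrix.mul_apply, Finset.sum_apply, mul_comm]
      rfl
    rw [this]
    calc f (fun q => ∑ m : ι, B m q • col (σ (e q)) m)
        = ∑ g : ι → ι, f (fun q => B (g q) q • col (σ (e q)) (g q)) :=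
          f.toMultilinearMap.map_sum (fun q m => B m q • col (σ (e q)) m)
      _ = ∑ g : ι → ι, (∏ q : ι, B (g q) q) • f (fun q => col (σ (e q)) (g q)) :=
          Finset.sum_congr rfl fun g _ => f.toMultilinearMap.map_smul_univ
            (fun q => B (g q) q) (fun q => col (σ (e q)) (g q))
  -- the inner sum over σ for fixed g
  have vanish : ∀ g : ι → ι, ¬ Function.Injective g →
      ∑ σ : Equiv.Perm N, f (fun q => col (σ (e q)) (g q)) = 0 := by
    intro g hg
    rw [Function.not_injective_iff] at hg
    obtain ⟨q₁, q₂, hgq, hne⟩ := hg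
    set s : Equiv.Perm N := Equiv.swap (e q₁) (e q₂) with hs
    refine Finset.sum_involution (fun σ _ => σ * s) ?_ ?_ (fun _ _ => Finset.mem_univ _) ?_
    · intro σ _
      have key : (fun q => col ((σ * s) (e q)) (g q))
          = (fun q => col (σ (e q)) (g q)) ∘ (Equiv.swap q₁ q₂) := by
        funext q
        simp only [Function.comp]
        rcases eq_or_ne q q₁ with rfl | h1
        · simp [s, Equiv.swap_apply_left, hgq, Equiv.Perm.mul_apply]
        rcases eq_or_ne q q₂ with rfl | h2
        · simp [s, Equiv.swap_apply_right, hgq, Equiv.Perm.mul_apply]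
        · have : s (e q) = e q := Equiv.swap_apply_of_ne_of_ne
            (fun h => h1 (e.injective h)) (fun h => h2 (e.injective h))
          simp [Equiv.Perm.mul_apply, this, Equiv.swap_apply_of_ne_of_ne h1 h2]
      rw [key, f.map_perm]
      rw [Equiv.Perm.sign_swap hne]
      simp
    · intro σ _ _
      intro h
      have : s = 1 := by
        have := congrArg (σ⁻¹ * ·) h
        simpa [mul_assoc] using this
      have := congrArg (fun t => t (e q₁)) this
      simp [s, Equiv.swap_apply_left] at this
      exact hne this.symm
    · intro σ _
      simp [mul_assoc, s]
  have perm_case : ∀ π : Equiv.Perm ι,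
      ∑ σ : Equiv.Perm N, f (fun q => col (σ (e q)) (π q))
        = Equiv.Perm.sign π • ∑ σ : Equiv.Perm N, f (fun q => col (σ (e q)) q) := by
    intro π
    rw [Finset.smul_sum]
    set ρ : Equiv.Perm N := (e.symm.trans π.symm).trans e with hρ
    rw [← Equiv.sum_comp (Equiv.mulRight ρ)
      (fun σ => Equiv.Perm.sign π • f (fun q => col (σ (e q)) q))]
    refine Finset.sum_congr rfl fun σ _ => ?_
    have key : (fun q => col (σ (e q)) (π q))
        = (fun q => col ((Equiv.mulRight ρ σ) (e q)) q) ∘ π := by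
      funext q
      simp [Function.comp, ρ, Equiv.Perm.mul_apply]
    rw [key, f.map_perm]
  calc Dmix e (fun k => Y k * B)
      = ∑ g : ι → ι, (∏ q : ι, B (g q) q) •
          ∑ σ : Equiv.Perm N, f (fun q => col (σ (e q)) (g q)) := by
        unfold Dmix
        simp only [step1]
        rw [Finset.sum_comm]
        refine Finset.sum_congr rfl fun g _ => ?_
        rw [Finset.smul_sum]
    _ = ∑ g ∈ Finset.univ.image (fun π : Equiv.Perm ι => ⇑π),
          (∏ q : ι, B (g q) q) •
          ∑ σ : Equiv.Perm N, f (fun q => col (σ (e q)) (g q)) := by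
        refine (Finset.sum_subset (Finset.subset_univ _) ?_).symm
        intro g _ hg
        have : ¬ Function.Injective g := by
          intro hinj
          have hbij : Function.Bijective g := Finite.injective_iff_bijective.mp hinj
          exact hg (Finset.mem_image.mpr ⟨Equiv.ofBijective g hbij, Finset.mem_univ _, rfl⟩)
        rw [vanish g this, smul_zero]
    _ = ∑ π : Equiv.Perm ι, (∏ q : ι, B (π q) q) •
          ∑ σ : Equiv.Perm N, f (fun q => col (σ (e q)) (π q)) := by
        rw [Finset.sum_image (fun π _ π' _ h => Equiv.coe_fn_injective h)]
    _ = (∑ π : Equiv.Perm ι, Equiv.Perm.sign π • ∏ q : ι, B (π q) q) *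
          ∑ σ : Equiv.Perm N, f (fun q => col (σ (e q)) q) := by
        rw [Finset.sum_mul]
        refine Finset.sum_congr rfl fun π _ => ?_
        rw [perm_case π]
        rw [smul_mul_assoc, smul_comm]
        rw [smul_eq_mul]
    _ = B.det * Dmix e Y := by
        rw [← Matrix.det_apply]
        congr 1
        unfold Dmix
        exact (Finset.sum_congr rfl fun σ _ => (hdet σ).symm)

end Dmix

/-- A filling: a `d × n` tableau filled bijectively with the labels `1, …, dn`
(first index = row). -/
abbrev Filling (n d : ℕ) := (Fin d × Fin n) ≃ Fin (d * n)

/-- The polynomial ring `ℚ[x_{i,j}^{(k)} : k ∈ {1,…,dn}, i,j ∈ {1,…,n}]`. -/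
abbrev PolyRing (n d : ℕ) := MvPolynomial (Fin (d * n) × Fin n × Fin n) ℚ

/-- The `dn × dn` matrix `Y_k`, a `d × d` array of `n × n` blocks whose only nonzero
block is `X_k`, placed at position (row of `k` in `S`, row of `k` in `T`). -/
def Ymat (n d : ℕ) (ST : Filling n d × Filling n d) (k : Fin (d * n)) :
    Matrix (Fin d × Fin n) (Fin d × Fin n) (PolyRing n d) :=
  Matrix.of fun p q =>
    if p.1 = (ST.1.symm k).1 ∧ q.1 = (ST.2.symm k).1 then MvPolynomial.X (k, p.2, q.2)
    else 0

/-- The mixed-discriminant polynomial `P(S,T) = Σ_{σ ∈ S_{dn}} det(Z_σ)`, where the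
`ℓ`-th column of `Z_σ` is the `ℓ`-th column of `Y_{σ(ℓ)}`. -/
def Ppoly (n d : ℕ) (ST : Filling n d × Filling n d) : PolyRing n d :=
  ∑ σ : Equiv.Perm (Fin (d * n)),
    (Matrix.of fun p q : Fin d × Fin n =>
      Ymat n d ST (σ (finProdFinEquiv q)) p q).det

/-- The `n × n` matrix of variables `X_k = (x_{i,j}^{(k)})`. -/
def Xmat (n d : ℕ) (k : Fin (d * n)) : Matrix (Fin n) (Fin n) (PolyRing n d) :=
  Matrix.of fun i j => MvPolynomial.X (k, i, j)

/-- `P(S,T)` is a matrix semi-invariant: it is fixed by the substitution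
`x_{i,j}^{(k)} ↦ (A · X_k · C⁻¹)_{i,j}` for every `(A,C) ∈ SL(n,ℚ) × SL(n,ℚ)`. -/
theorem stmt10 (n d : ℕ) (hn : 0 < n) (hd : 0 < d) (ST : Filling n d × Filling n d)
    (A C : Matrix.SpecialLinearGroup (Fin n) ℚ) :
    MvPolynomial.aeval (fun p : Fin (d * n) × Fin n × Fin n =>
      ((((A : Matrix (Fin n) (Fin n) ℚ).map (MvPolynomial.C) * Xmat n d p.1 *
        ((C⁻¹ : Matrix.SpecialLinearGroup (Fin n) ℚ) : Matrix (Fin n) (Fin n) ℚ).map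
          (MvPolynomial.C)) :
        Matrix (Fin n) (Fin n) (PolyRing n d)) p.2.1 p.2.2)) (Ppoly n d ST)
      = Ppoly n d ST := by
  classical
  set φ : PolyRing n d →ₐ[ℚ] PolyRing n d :=
    MvPolynomial.aeval (fun p : Fin (d * n) × Fin n × Fin n =>
      ((((A : Matrix (Fin n) (Fin n) ℚ).map (MvPolynomial.C) * Xmat n d p.1 *
        ((C⁻¹ : Matrix.SpecialLinearGroup (Fin n) ℚ) : Matrix (Fin n) (Fin n) ℚ).map
          (MvPolynomial.C)) :
        Matrix (Fin n) (Fin n) (PolyRing n d)) p.2.1 p.2.2)) with hφ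
  set Amap : Matrix (Fin n) (Fin n) (PolyRing n d) :=
    (A : Matrix (Fin n) (Fin n) ℚ).map MvPolynomial.C with hAmap
  set Cmap : Matrix (Fin n) (Fin n) (PolyRing n d) :=
    ((C⁻¹ : Matrix.SpecialLinearGroup (Fin n) ℚ) : Matrix (Fin n) (Fin n) ℚ).map
      MvPolynomial.C with hCmap
  set bigA : Matrix (Fin d × Fin n) (Fin d × Fin n) (PolyRing n d) :=
    Matrix.kroneckerMap (· * ·) (1 : Matrix (Fin d) (Fin d) (PolyRing n d)) Amap with hbigA
  set bigC : Matrix (Fin d × Fin n) (Fin d × Fin n) (PolyRing n d) :=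
    Matrix.kroneckerMap (· * ·) (1 : Matrix (Fin d) (Fin d) (PolyRing n d)) Cmap with hbigC
  -- key entrywise transformation
  have key : ∀ k : Fin (d * n),
      (Ymat n d ST k).map ⇑φ = bigA * Ymat n d ST k * bigC := by
    intro k
    refine Matrix.ext fun p q => ?_
    obtain ⟨pd, pn⟩ := p; obtain ⟨qd, qn⟩ := q
    have lhs : (Ymat n d ST k).map ⇑φ (pd, pn) (qd, qn)
        = if pd = (ST.1.symm k).1 ∧ qd = (ST.2.symm k).1 then
            (Amap * Xmat n d k * Cmap) pn qn else 0 := by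
      simp only [Matrix.map_apply, Ymat, Matrix.of_apply, apply_ite ⇑φ, map_zero]
      rw [hφ]
      simp [hAmap, hCmap]
    rw [lhs]
    rw [Matrix.mul_apply, Matrix.mul_apply]
    simp only [hbigA, hbigC, Matrix.kroneckerMap_apply, Matrix.one_apply, Ymat,
      Matrix.of_apply, Matrix.mul_apply, Fintype.sum_prod_type, ite_mul, mul_ite,
      one_mul, zero_mul, mul_zero]
    by_cases h1 : pd = (ST.1.symm k).1 <;> by_cases h2 : qd = (ST.2.symm k).1 <;>
      simp [h1, h2, Xmat, Finset.sum_ite_eq, Finset.sum_ite_eq', Finset.mul_sum,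
        Finset.sum_mul, mul_assoc]
  have detA : bigA.det = 1 := by
    rw [hbigA, Matrix.det_kronecker, Matrix.det_one, one_pow, one_mul, hAmap,
      ← RingHom.mapMatrix_apply, ← RingHom.map_det, Matrix.SpecialLinearGroup.det_coe,
      _root_.map_one, one_pow]
  have detC : bigC.det = 1 := by
    rw [hbigC, Matrix.det_kronecker, Matrix.det_one, one_pow, one_mul, hCmap,
      ← RingHom.mapMatrix_apply, ← RingHom.map_det, Matrix.SpecialLinearGroup.det_coe,
      _root_.map_one, one_pow]
  have hP : Ppoly n d ST = Dmix finProdFinEquiv (Ymat n d ST) := rfl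
  have step : φ (Ppoly n d ST)
      = Dmix finProdFinEquiv (fun k => bigA * Ymat n d ST k * bigC) := by
    rw [hP]
    unfold Dmix
    rw [map_sum]
    refine Finset.sum_congr rfl fun σ _ => ?_
    rw [AlgHom.map_det, AlgHom.mapMatrix_apply]
    congr 1
    refine Matrix.ext fun p q => ?_
    rw [Matrix.map_apply, Matrix.of_apply]
    show φ (Ymat n d ST (σ (finProdFinEquiv q)) p q)
      = (bigA * Ymat n d ST (σ (finProdFinEquiv q)) * bigC) p q
    rw [← key (σ (finProdFinEquiv q)), Matrix.map_apply]
  rw [step]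
  have : (fun k => bigA * Ymat n d ST k * bigC)
      = (fun k => (fun k' => bigA * Ymat n d ST k') k * bigC) := rfl
  rw [this, Dmix_mul_right, Dmix_mul_left, detA, detC, one_mul, one_mul, hP]
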